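/- If the structure constants f satisfy the Jacobi identity, then for every a and every μ the anomaly 𝒜(C_a^μ,T) := f_{abc}( − v_{bν} C_c^{μν} + u_b C_c^μ + F_b^{μν} B_{cν} − (d^μ ũ_b) B_c ) vanishes in the jet algebra 𝒜 (sum over b,c and ν). -/
import Mathlib


open scoped TensorProduct

noncomputable section

/-- Lorentz indices. -/
abbrev Idx : Type := Fin 4

/-- The Minkowski metric `η = diag(1,-1,-1,-1)`, as complex scalars. -/
def η (μ ν : Idx) : ℂ := if μ = ν then (if μ = 0 then 1 else -1) else 0

/-- Even generators `v_{aμ;M}` of the jet algebra. -/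
structure EvenGen (r : ℕ) : Type where
  a : Fin r
  μ : Idx
  M : Multiset Idx
deriving DecidableEq

/-- Odd generators of the jet algebra: `u_{a;M}` (`tilde = false`) and `ũ_{a;M}`
(`tilde = true`). -/
structure OddGen (r : ℕ) : Type where
  tilde : Bool
  a : Fin r
  M : Multiset Idx
deriving DecidableEq

/-- The jet algebra `𝒜` of pure Yang-Mills: the free ℤ₂-graded-commutative unital
ℂ-algebra on the even generators `v_{aμ;M}` and the odd generators `u_{a;M}`, `ũ_{a;M}`,
realized concretely as the tensor product of the commutative polynomial algebra on the
even generators with the exterior algebra of the free ℂ-module on the odd generators. -/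
abbrev Jet (r : ℕ) : Type :=
  MvPolynomial (EvenGen r) ℂ ⊗[ℂ] ExteriorAlgebra ℂ (OddGen r →₀ ℂ)

variable {r : ℕ}

/-- The generator `v_{aμ;M}` as an element of `𝒜`. -/
def vGen (a : Fin r) (μ : Idx) (M : Multiset Idx) : Jet r :=
  MvPolynomial.X ⟨a, μ, M⟩ ⊗ₜ[ℂ] 1

/-- The generator `u_{a;M}` as an element of `𝒜`. -/
def uGen (a : Fin r) (M : Multiset Idx) : Jet r :=
  1 ⊗ₜ[ℂ] ExteriorAlgebra.ι ℂ (Finsupp.single ⟨false, a, M⟩ (1 : ℂ))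

/-- The generator `ũ_{a;M}` as an element of `𝒜`. -/
def utGen (a : Fin r) (M : Multiset Idx) : Jet r :=
  1 ⊗ₜ[ℂ] ExteriorAlgebra.ι ℂ (Finsupp.single ⟨true, a, M⟩ (1 : ℂ))

/-- Data of the formal derivatives `d_ν`, the grading (parity) automorphism `σ`
(which is `+1` on even elements and `-1` on odd elements, so that the graded Leibniz
rule for the odd derivation `d_Q` can be written as `d_Q(xy) = (d_Q x) y + σ(x) d_Q y`),
and the gauge variation `d_Q`, together with their defining properties.
Since `𝒜` is generated by the generators, these properties determine `d_ν`, `σ`, `d_Q`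
uniquely. -/
structure DerData (r : ℕ) where
  /-- the formal derivative `d_ν` -/
  d : Idx → Jet r →ₗ[ℂ] Jet r
  /-- the parity automorphism -/
  σ : Jet r →ₐ[ℂ] Jet r
  /-- the gauge variation `d_Q` -/
  dQ : Jet r →ₗ[ℂ] Jet r
  d_mul : ∀ (ν : Idx) (x y : Jet r), d ν (x * y) = d ν x * y + x * d ν y
  d_v : ∀ (ν : Idx) (a : Fin r) (μ : Idx) (M : Multiset Idx),
    d ν (vGen a μ M) = vGen a μ (ν ::ₘ M)
  d_u : ∀ (ν : Idx) (a : Fin r) (M : Multiset Idx), d ν (uGen a M) = uGen a (ν ::ₘ M)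
  d_ut : ∀ (ν : Idx) (a : Fin r) (M : Multiset Idx), d ν (utGen a M) = utGen a (ν ::ₘ M)
  σ_v : ∀ (a : Fin r) (μ : Idx) (M : Multiset Idx), σ (vGen a μ M) = vGen a μ M
  σ_u : ∀ (a : Fin r) (M : Multiset Idx), σ (uGen a M) = - uGen a M
  σ_ut : ∀ (a : Fin r) (M : Multiset Idx), σ (utGen a M) = - utGen a M
  dQ_mul : ∀ x y : Jet r, dQ (x * y) = dQ x * y + σ x * dQ y
  dQ_v : ∀ (a : Fin r) (μ : Idx) (M : Multiset Idx),
    dQ (vGen a μ M) = Complex.I • uGen a (μ ::ₘ M)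
  dQ_u : ∀ (a : Fin r) (M : Multiset Idx), dQ (uGen a M) = 0
  dQ_ut : ∀ (a : Fin r) (M : Multiset Idx),
    dQ (utGen a M) = (-Complex.I) • ∑ ρ : Idx, ∑ s : Idx, η ρ s • vGen a ρ (s ::ₘ M)

/-- The wave-equation elements `η^{ρσ} ξ_{;M+{ρ,σ}}`, for `ξ` any generator. -/
def IsWave (w : Jet r) : Prop :=
  (∃ (a : Fin r) (μ : Idx) (M : Multiset Idx),
      w = ∑ ρ : Idx, ∑ s : Idx, η ρ s • vGen a μ (ρ ::ₘ s ::ₘ M)) ∨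
  (∃ (a : Fin r) (M : Multiset Idx),
      w = ∑ ρ : Idx, ∑ s : Idx, η ρ s • uGen a (ρ ::ₘ s ::ₘ M)) ∨
  (∃ (a : Fin r) (M : Multiset Idx),
      w = ∑ ρ : Idx, ∑ s : Idx, η ρ s • utGen a (ρ ::ₘ s ::ₘ M))

/-- The equations-of-motion ideal `I`: the two-sided ideal of `𝒜` generated by the
wave-equation elements (as a ℂ-subspace, the span of all `p * w * q` with `w` a
wave-equation element). -/
def eom (r : ℕ) : Submodule ℂ (Jet r) :=
  Submodule.span ℂ {x : Jet r | ∃ w p q : Jet r, IsWave w ∧ x = p * w * q}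

/-- The raised formal derivative `d^μ = η^{μν} d_ν`. -/
def dUp (D : DerData r) (μ : Idx) (x : Jet r) : Jet r := ∑ ν : Idx, η μ ν • D.d ν x

/-- `v_a^μ := η^{μν} v_{aν}`. -/
def vUp (a : Fin r) (μ : Idx) : Jet r := ∑ ν : Idx, η μ ν • vGen a ν 0

/-- The field strength `F_a^{μν} := d^μ v_a^ν - d^ν v_a^μ`. -/
def Fuu (D : DerData r) (a : Fin r) (μ ν : Idx) : Jet r :=
  dUp D μ (vUp a ν) - dUp D ν (vUp a μ)

/-- The lowered field strength `F_{aμν} := η_{μρ} η_{νσ} F_a^{ρσ}`. -/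
def Fdd (D : DerData r) (a : Fin r) (μ ν : Idx) : Jet r :=
  ∑ ρ : Idx, ∑ s : Idx, (η μ ρ * η ν s) • Fuu D a ρ s

variable (D : DerData r) (f : Fin r → Fin r → Fin r → ℝ)

/-- The Yang-Mills interaction Lagrangian
`T := f_{abc}(½ v_{aμ} v_{bν} F_c^{νμ} + u_a v_b^μ (d_μ ũ_c))`. -/
def Tint : Jet r :=
  ∑ a : Fin r, ∑ b : Fin r, ∑ c : Fin r, ((f a b c : ℝ) : ℂ) •
    ((2⁻¹ : ℂ) • ∑ μ : Idx, ∑ ν : Idx, vGen a μ 0 * vGen b ν 0 * Fuu D c ν μ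
      + ∑ μ : Idx, uGen a 0 * vUp b μ * D.d μ (utGen c 0))

/-- `T^μ := f_{abc}(u_a v_{bν} F_c^{νμ} - ½ u_a u_b (d^μ ũ_c))`. -/
def Tup (μ : Idx) : Jet r :=
  ∑ a : Fin r, ∑ b : Fin r, ∑ c : Fin r, ((f a b c : ℝ) : ℂ) •
    (∑ ν : Idx, uGen a 0 * vGen b ν 0 * Fuu D c ν μ
      - (2⁻¹ : ℂ) • (uGen a 0 * uGen b 0 * dUp D μ (utGen c 0)))

/-- `T^{μν} := ½ f_{abc} u_a u_b F_c^{μν}`. -/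
def Tupup (μ ν : Idx) : Jet r :=
  (2⁻¹ : ℂ) • ∑ a : Fin r, ∑ b : Fin r, ∑ c : Fin r, ((f a b c : ℝ) : ℂ) •
    (uGen a 0 * uGen b 0 * Fuu D c μ ν)

/-- The Wick submonomial `B_{aμ} := -f_{abc} u_b v_{cμ}`. -/
def Bdn (a : Fin r) (μ : Idx) : Jet r :=
  ∑ b : Fin r, ∑ c : Fin r, (-((f a b c : ℝ) : ℂ)) • (uGen b 0 * vGen c μ 0)

/-- `B_a^μ := η^{μν} B_{aν}`. -/
def Bup (a : Fin r) (μ : Idx) : Jet r := ∑ ν : Idx, η μ ν • Bdn f a ν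

/-- The Wick submonomial `C_{aμ} := f_{abc}(v_b^ν F_{cνμ} - u_b (d_μ ũ_c))`. -/
def Cdn (a : Fin r) (μ : Idx) : Jet r :=
  ∑ b : Fin r, ∑ c : Fin r, ((f a b c : ℝ) : ℂ) •
    (∑ ν : Idx, vUp b ν * Fdd D c ν μ - uGen b 0 * D.d μ (utGen c 0))

/-- `C_a^μ := η^{μν} C_{aν}`. -/
def Cup (a : Fin r) (μ : Idx) : Jet r := ∑ ν : Idx, η μ ν • Cdn D f a ν

/-- The Wick submonomial `D_a := f_{abc} v_b^μ (d_μ ũ_c)`. -/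
def Dgh (a : Fin r) : Jet r :=
  ∑ b : Fin r, ∑ c : Fin r, ((f a b c : ℝ) : ℂ) •
    ∑ μ : Idx, vUp b μ * D.d μ (utGen c 0)

/-- The Wick submonomial `E_{aμν} := f_{abc} v_{bμ} v_{cν}`. -/
def Edd (a : Fin r) (μ ν : Idx) : Jet r :=
  ∑ b : Fin r, ∑ c : Fin r, ((f a b c : ℝ) : ℂ) • (vGen b μ 0 * vGen c ν 0)

/-- `E_a^{μν} := η^{μρ} η^{νσ} E_{aρσ}`. -/
def Euu (a : Fin r) (μ ν : Idx) : Jet r :=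
  ∑ ρ : Idx, ∑ s : Idx, (η μ ρ * η ν s) • Edd f a ρ s

/-- The Wick submonomial `C_{aμν} := -f_{abc} u_b F_{cμν}`. -/
def Cdd (a : Fin r) (μ ν : Idx) : Jet r :=
  ∑ b : Fin r, ∑ c : Fin r, (-((f a b c : ℝ) : ℂ)) • (uGen b 0 * Fdd D c μ ν)

/-- `C_a^{μν} := η^{μρ} η^{νσ} C_{aρσ}`. -/
def Cuu (a : Fin r) (μ ν : Idx) : Jet r :=
  ∑ ρ : Idx, ∑ s : Idx, (η μ ρ * η ν s) • Cdd D f a ρ s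

/-- The Wick submonomial `B_a := ½ f_{abc} u_b u_c`. -/
def Bgh (a : Fin r) : Jet r :=
  (2⁻¹ : ℂ) • ∑ b : Fin r, ∑ c : Fin r, ((f a b c : ℝ) : ℂ) • (uGen b 0 * uGen c 0)


/-! ### Auxiliary lemmas -/

section Aux

lemma eta_sum {M : Type*} [AddCommMonoid M] [Module ℂ M] (μ : Idx) (x : Idx → M) :
    ∑ ρ : Idx, η μ ρ • x ρ = η μ μ • x μ := by
  rw [Finset.sum_eq_single μ]
  · intro ρ _ hρ
    have h0 : η μ ρ = 0 := by simp [η, (Ne.symm hρ)]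
    rw [h0, zero_smul]
  · intro h; exact absurd (Finset.mem_univ μ) h

lemma eta_sum2 {M : Type*} [AddCommMonoid M] [Module ℂ M] (μ ν : Idx) (x : Idx → Idx → M) :
    ∑ ρ : Idx, ∑ s : Idx, (η μ ρ * η ν s) • x ρ s = (η μ μ * η ν ν) • x μ ν := by
  calc ∑ ρ : Idx, ∑ s : Idx, (η μ ρ * η ν s) • x ρ s
      = ∑ ρ : Idx, η μ ρ • ∑ s : Idx, η ν s • x ρ s := by
        refine Finset.sum_congr rfl fun ρ _ => ?_
        rw [Finset.smul_sum]
        exact Finset.sum_congr rfl fun s _ => (mul_smul _ _ _)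
    _ = η μ μ • ∑ s : Idx, η ν s • x μ s := eta_sum μ _
    _ = η μ μ • (η ν ν • x μ ν) := by rw [eta_sum]
    _ = (η μ μ * η ν ν) • x μ ν := (mul_smul _ _ _).symm

lemma eta_mul_self (μ : Idx) : η μ μ * η μ μ = 1 := by
  fin_cases μ <;> norm_num [η, Fin.ext_iff]

lemma tmul_one_comm {r : ℕ} (p : MvPolynomial (EvenGen r) ℂ) (x : Jet r) :
    (p ⊗ₜ[ℂ] (1 : ExteriorAlgebra ℂ (OddGen r →₀ ℂ))) * x
      = x * (p ⊗ₜ[ℂ] 1) := by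
  induction x using TensorProduct.induction_on with
  | zero => simp
  | tmul q m =>
      rw [Algebra.TensorProduct.tmul_mul_tmul, Algebra.TensorProduct.tmul_mul_tmul,
        one_mul, mul_one, mul_comm]
  | add x y hx hy => rw [mul_add, add_mul, hx, hy]

lemma vGen_comm {r : ℕ} (a : Fin r) (μ : Idx) (M : Multiset Idx) (x : Jet r) :
    vGen a μ M * x = x * vGen a μ M := tmul_one_comm _ x

lemma oGen_anticomm {r : ℕ} (g h : OddGen r) :
    ((1 : MvPolynomial (EvenGen r) ℂ) ⊗ₜ[ℂ]
        ExteriorAlgebra.ι ℂ (Finsupp.single g (1 : ℂ)))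
      * ((1 : MvPolynomial (EvenGen r) ℂ) ⊗ₜ[ℂ]
        ExteriorAlgebra.ι ℂ (Finsupp.single h (1 : ℂ)))
    = -(((1 : MvPolynomial (EvenGen r) ℂ) ⊗ₜ[ℂ]
        ExteriorAlgebra.ι ℂ (Finsupp.single h (1 : ℂ)))
      * ((1 : MvPolynomial (EvenGen r) ℂ) ⊗ₜ[ℂ]
        ExteriorAlgebra.ι ℂ (Finsupp.single g (1 : ℂ)))) := by
  rw [Algebra.TensorProduct.tmul_mul_tmul, Algebra.TensorProduct.tmul_mul_tmul, one_mul,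
    ← TensorProduct.tmul_neg]
  congr 1
  exact eq_neg_of_add_eq_zero_left (ExteriorAlgebra.ι_add_mul_swap _ _)

lemma uGen_anticomm {r : ℕ} (a b : Fin r) (M N : Multiset Idx) :
    uGen a M * uGen b N = -(uGen b N * uGen a M) := oGen_anticomm _ _

lemma utGen_uGen_anticomm {r : ℕ} (a b : Fin r) (M N : Multiset Idx) :
    utGen a M * uGen b N = -(uGen b N * utGen a M) := oGen_anticomm _ _

end Aux

section Aux2
variable {r : ℕ}

lemma dUp_ut (D : DerData r) (μ : Idx) (b : Fin r) :
    dUp D μ (utGen b 0) = η μ μ • utGen b (μ ::ₘ 0) := by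
  unfold dUp
  simp_rw [D.d_ut]
  exact eta_sum μ _

lemma Fuu_eq (D : DerData r) (a : Fin r) (μ ν : Idx) :
    Fuu D a μ ν = (η μ μ * η ν ν) • (vGen a ν (μ ::ₘ 0) - vGen a μ (ν ::ₘ 0)) := by
  unfold Fuu dUp vUp
  have h1 : ∀ (κ l : Idx) (b : Fin r),
      (∑ ρ : Idx, η κ ρ • D.d ρ (∑ s : Idx, η l s • vGen b s 0))
        = η κ κ • (η l l • vGen b l (κ ::ₘ 0)) := by
    intro κ l b
    have h2 : ∀ ρ : Idx, D.d ρ (∑ s : Idx, η l s • vGen b s 0)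
        = η l l • vGen b l (ρ ::ₘ 0) := by
      intro ρ
      rw [map_sum]
      simp_rw [map_smul, D.d_v]
      exact eta_sum l _
    simp_rw [h2]
    exact eta_sum κ _
  rw [h1, h1, smul_smul, smul_smul, mul_comm (η ν ν) (η μ μ), smul_sub]

lemma Fuu_comm (D : DerData r) (a : Fin r) (μ ν : Idx) (x : Jet r) :
    Fuu D a μ ν * x = x * Fuu D a μ ν := by
  rw [Fuu_eq, smul_mul_assoc, mul_smul_comm, sub_mul, mul_sub, vGen_comm, vGen_comm]

lemma Fuu_swap (D : DerData r) (a : Fin r) (μ ν : Idx) :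
    Fuu D a ν μ = -Fuu D a μ ν := (neg_sub _ _).symm

/-- Normal-form monomial `u_x v_{yν} F_z^{μν}` (summed over ν). -/
def Pm (D : DerData r) (μ : Idx) (x y z : Fin r) : Jet r :=
  ∑ ν : Idx, uGen x 0 * (vGen y ν 0 * Fuu D z μ ν)

/-- Normal-form monomial `u_x u_y ũ_{z;{μ}}`. -/
def Qm (μ : Idx) (x y z : Fin r) : Jet r :=
  uGen x 0 * (uGen y 0 * utGen z (μ ::ₘ 0))

lemma Qm_antisymm (μ : Idx) (x y z : Fin r) :
    Qm (r := r) μ y x z = -Qm μ x y z := by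
  unfold Qm
  rw [← mul_assoc, ← mul_assoc, uGen_anticomm]
  rw [neg_mul (uGen x 0 * uGen y 0) (utGen z (μ ::ₘ 0)), mul_assoc (uGen x 0) (uGen y 0)]

lemma ut_mul_uu (μ : Idx) (b d e : Fin r) :
    utGen b (μ ::ₘ 0) * (uGen d 0 * uGen e 0) = Qm (r := r) μ d e b := by
  unfold Qm
  calc utGen b (μ ::ₘ 0) * (uGen d 0 * uGen e 0)
      = (utGen b (μ ::ₘ 0) * uGen d 0) * uGen e 0 := (mul_assoc _ _ _).symm
    _ = -(uGen d 0 * utGen b (μ ::ₘ 0)) * uGen e 0 := by rw [utGen_uGen_anticomm]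
    _ = -(uGen d 0 * (utGen b (μ ::ₘ 0) * uGen e 0)) := by
          rw [neg_mul (uGen d 0 * utGen b (μ ::ₘ 0)) (uGen e 0),
            mul_assoc (uGen d 0) (utGen b (μ ::ₘ 0)) (uGen e 0)]
    _ = -(uGen d 0 * -(uGen e 0 * utGen b (μ ::ₘ 0))) := by rw [utGen_uGen_anticomm]
    _ = uGen d 0 * (uGen e 0 * utGen b (μ ::ₘ 0)) := by
          rw [mul_neg (uGen d 0) (uGen e 0 * utGen b (μ ::ₘ 0)), neg_neg]

lemma Cuu_eq (D : DerData r) (f : Fin r → Fin r → Fin r → ℝ) (c : Fin r) (μ ν : Idx) :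
    Cuu D f c μ ν
      = ∑ d : Fin r, ∑ e : Fin r, (-((f c d e : ℝ) : ℂ)) • (uGen d 0 * Fuu D e μ ν) := by
  unfold Cuu Cdd Fdd
  rw [eta_sum2]
  simp_rw [eta_sum2]
  rw [Finset.smul_sum]
  refine Finset.sum_congr rfl fun d _ => ?_
  rw [Finset.smul_sum]
  refine Finset.sum_congr rfl fun e _ => ?_
  rw [mul_smul_comm, smul_smul, smul_smul]
  congr 1
  have h1 := eta_mul_self μ
  have h2 := eta_mul_self ν
  linear_combination (-((f c d e : ℝ) : ℂ)) * (η ν ν * η ν ν) * h1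
    + (-((f c d e : ℝ) : ℂ)) * h2

lemma Cup_eq (D : DerData r) (f : Fin r → Fin r → Fin r → ℝ) (c : Fin r) (μ : Idx) :
    Cup D f c μ
      = ∑ d : Fin r, ∑ e : Fin r, ((f c d e : ℝ) : ℂ) •
          ((∑ ν : Idx, vGen d ν 0 * Fuu D e ν μ)
            - η μ μ • (uGen d 0 * utGen e (μ ::ₘ 0))) := by
  unfold Cup Cdn Fdd vUp
  rw [eta_sum]
  rw [Finset.smul_sum]
  refine Finset.sum_congr rfl fun d _ => ?_
  rw [Finset.smul_sum]
  refine Finset.sum_congr rfl fun e _ => ?_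
  rw [smul_comm (η μ μ)]
  congr 1
  rw [D.d_ut, smul_sub]
  congr 1
  rw [Finset.smul_sum]
  refine Finset.sum_congr rfl fun ν _ => ?_
  rw [eta_sum2, eta_sum]
  rw [smul_mul_assoc, mul_smul_comm, smul_smul, smul_smul]
  have h1 := eta_mul_self μ
  have h2 := eta_mul_self ν
  rw [show η μ μ * η ν ν * (η ν ν * η μ μ) = 1 by
    linear_combination (η ν ν * η ν ν) * h1 + h2, one_smul]

end Aux2

section Aux3
variable {r : ℕ}

lemma jmul_sum {ι : Type*} (s : Finset ι) (x : Jet r) (g : ι → Jet r) :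
    x * ∑ i ∈ s, g i = ∑ i ∈ s, x * g i := Finset.mul_sum s g x

lemma jmul_smul (c : ℂ) (x y : Jet r) : x * (c • y) = c • (x * y) :=
  (mul_smul_comm c x y)

lemma jsmul_mul (c : ℂ) (x y : Jet r) : (c • x) * y = c • (x * y) :=
  (smul_mul_assoc c x y)

lemma jmul_sub (x y z : Jet r) : x * (y - z) = x * y - x * z := mul_sub x y z

lemma jneg_smul (c : ℂ) (x : Jet r) : (-c) • x = -(c • x) := neg_smul c x

lemma jsmul_neg (c : ℂ) (x : Jet r) : c • (-x) = -(c • x) := smul_neg c x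

lemma jmul_neg' (x y : Jet r) : x * (-y) = -(x * y) := mul_neg x y

lemma jsmul_sum {ι : Type*} (s : Finset ι) (c : ℂ) (g : ι → Jet r) :
    c • ∑ i ∈ s, g i = ∑ i ∈ s, c • g i := Finset.smul_sum

lemma sum_swap' {M : Type*} [AddCommMonoid M] {ι κ : Type*} [Fintype ι] [Fintype κ]
    (g : ι → κ → M) :
    ∑ i : ι, ∑ j : κ, g i j = ∑ j : κ, ∑ i : ι, g i j := Finset.sum_comm

lemma termA_eq (D : DerData r) (f : Fin r → Fin r → Fin r → ℝ) (μ : Idx) (b c : Fin r) :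
    (- ∑ ν : Idx, vGen b ν 0 * Cuu D f c μ ν)
      = ∑ d : Fin r, ∑ e : Fin r, ((f c d e : ℝ) : ℂ) • Pm D μ d b e := by
  simp only [Cuu_eq, jmul_sum, jmul_smul, jneg_smul, jmul_neg', Finset.sum_neg_distrib, neg_neg]
  rw [sum_swap' (ι := Idx) (κ := Fin r)]
  refine Finset.sum_congr rfl fun d _ => ?_
  rw [sum_swap' (ι := Idx) (κ := Fin r)]
  refine Finset.sum_congr rfl fun e _ => ?_
  unfold Pm
  rw [jsmul_sum]
  refine Finset.sum_congr rfl fun ν _ => ?_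
  congr 1
  rw [← mul_assoc (vGen b ν 0) (uGen d 0), vGen_comm b ν 0 (uGen d 0),
    mul_assoc (uGen d 0)]

lemma termB_eq (D : DerData r) (f : Fin r → Fin r → Fin r → ℝ) (μ : Idx) (b c : Fin r) :
    uGen b 0 * Cup D f c μ
      = ∑ d : Fin r, ∑ e : Fin r, ((f c d e : ℝ) : ℂ) •
          (-Pm D μ b d e - η μ μ • Qm μ b d e) := by
  rw [Cup_eq, jmul_sum]
  refine Finset.sum_congr rfl fun d _ => ?_
  rw [jmul_sum]
  refine Finset.sum_congr rfl fun e _ => ?_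
  rw [jmul_smul]
  congr 1
  rw [jmul_sub, jmul_sum, jmul_smul]
  congr 1
  · unfold Pm
    rw [← Finset.sum_neg_distrib]
    refine Finset.sum_congr rfl fun ν _ => ?_
    rw [Fuu_swap D e μ ν, mul_neg (vGen d ν 0), mul_neg (uGen b 0)]

lemma termC_eq (D : DerData r) (f : Fin r → Fin r → Fin r → ℝ) (μ : Idx) (b c : Fin r) :
    (∑ ν : Idx, Fuu D b μ ν * Bdn f c ν)
      = ∑ d : Fin r, ∑ e : Fin r, ((f c d e : ℝ) : ℂ) • (-Pm D μ d e b) := by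
  unfold Bdn
  simp only [jmul_sum, jmul_smul, jneg_smul, jsmul_neg, jmul_neg', Finset.sum_neg_distrib]
  rw [neg_inj, sum_swap' (ι := Idx) (κ := Fin r)]
  refine Finset.sum_congr rfl fun d _ => ?_
  rw [sum_swap' (ι := Idx) (κ := Fin r)]
  refine Finset.sum_congr rfl fun e _ => ?_
  unfold Pm
  rw [jsmul_sum]
  refine Finset.sum_congr rfl fun ν _ => ?_
  congr 1
  rw [Fuu_comm D b μ ν (uGen d 0 * vGen e ν 0), mul_assoc (uGen d 0)]

lemma termD_eq (D : DerData r) (f : Fin r → Fin r → Fin r → ℝ) (μ : Idx) (b c : Fin r) :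
    dUp D μ (utGen b 0) * Bgh f c
      = ∑ d : Fin r, ∑ e : Fin r, ((f c d e : ℝ) : ℂ) •
          ((2⁻¹ * η μ μ) • Qm μ d e b) := by
  rw [dUp_ut]
  unfold Bgh
  simp only [jsmul_mul, jmul_smul, Finset.smul_sum, jmul_sum, smul_smul]
  refine Finset.sum_congr rfl fun d _ => Finset.sum_congr rfl fun e _ => ?_
  rw [ut_mul_uu]
  congr 1
  ring

lemma bracket_eq (D : DerData r) (f : Fin r → Fin r → Fin r → ℝ) (μ : Idx) (b c : Fin r) :
    (- ∑ ν : Idx, vGen b ν 0 * Cuu D f c μ ν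
      + uGen b 0 * Cup D f c μ
      + ∑ ν : Idx, Fuu D b μ ν * Bdn f c ν
      - dUp D μ (utGen b 0) * Bgh f c)
    = ∑ d : Fin r, ∑ e : Fin r, ((f c d e : ℝ) : ℂ) •
        (Pm D μ d b e - Pm D μ b d e - Pm D μ d e b
          - η μ μ • Qm μ b d e - (2⁻¹ * η μ μ) • Qm μ d e b) := by
  rw [termA_eq, termB_eq, termC_eq, termD_eq]
  simp only [← Finset.sum_add_distrib, ← Finset.sum_sub_distrib]
  refine Finset.sum_congr rfl fun d _ => Finset.sum_congr rfl fun e _ => ?_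
  rw [← smul_add, ← smul_add, ← smul_sub]
  congr 1
  abel

lemma quad_reindex {M : Type*} [AddCommMonoid M] [Module ℂ M]
    (f : Fin r → Fin r → Fin r → ℝ) (a : Fin r) (g : Fin r → Fin r → Fin r → M) :
    (∑ b : Fin r, ∑ c : Fin r, ∑ d : Fin r, ∑ e : Fin r,
        ((f a b c * f c d e : ℝ) : ℂ) • g b d e)
      = ∑ x : Fin r, ∑ y : Fin r, ∑ z : Fin r,
          ((∑ c : Fin r, f a x c * f c y z : ℝ) : ℂ) • g x y z := by
  refine Finset.sum_congr rfl fun b _ => ?_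
  rw [Finset.sum_comm]
  refine Finset.sum_congr rfl fun d _ => ?_
  rw [Finset.sum_comm]
  refine Finset.sum_congr rfl fun e _ => ?_
  rw [← Finset.sum_smul]
  congr 1
  norm_cast

lemma triple_swap {M : Type*} [AddCommMonoid M] (F : Fin r → Fin r → Fin r → M) :
    (∑ x : Fin r, ∑ y : Fin r, ∑ z : Fin r, F x y z)
      = ∑ x : Fin r, ∑ y : Fin r, ∑ z : Fin r, F y x z := Finset.sum_comm

lemma triple_rotate {M : Type*} [AddCommMonoid M] (F : Fin r → Fin r → Fin r → M) :
    (∑ x : Fin r, ∑ y : Fin r, ∑ z : Fin r, F x y z)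
      = ∑ x : Fin r, ∑ y : Fin r, ∑ z : Fin r, F z x y :=
  calc (∑ x : Fin r, ∑ y : Fin r, ∑ z : Fin r, F x y z)
      = ∑ y : Fin r, ∑ x : Fin r, ∑ z : Fin r, F x y z := Finset.sum_comm
    _ = ∑ y : Fin r, ∑ z : Fin r, ∑ x : Fin r, F x y z :=
        Finset.sum_congr rfl fun y _ => Finset.sum_comm

lemma jacobi_key (f : Fin r → Fin r → Fin r → ℝ)
    (hf₁ : ∀ a b c, f a b c = - f b a c) (hf₂ : ∀ a b c, f a b c = - f a c b)
    (hJac : ∀ a b c d : Fin r,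
      (∑ e : Fin r, (f e a b * f e c d + f e b c * f e a d + f e c a * f e b d)) = 0)
    (a x y z : Fin r) :
    (∑ c : Fin r, (f a y c * f c x z - f a x c * f c y z - f a z c * f c x y)) = 0 := by
  have hcyc : ∀ p q s : Fin r, f p q s = f s p q := by
    intro p q s
    rw [hf₂ p q s, ← hf₁ s p q]
  calc (∑ c : Fin r, (f a y c * f c x z - f a x c * f c y z - f a z c * f c x y))
      = ∑ c : Fin r, (f c a y * f c x z + f c y x * f c a z + f c x a * f c y z) := by
        refine Finset.sum_congr rfl fun c _ => ?_
        rw [hcyc a y c, hcyc a x c, hcyc a z c, hf₂ c y x, hf₂ c x a]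
        ring
    _ = 0 := hJac a y x z

lemma jacobi_key' (f : Fin r → Fin r → Fin r → ℝ)
    (hf₁ : ∀ a b c, f a b c = - f b a c) (hf₂ : ∀ a b c, f a b c = - f a c b)
    (hJac : ∀ a b c d : Fin r,
      (∑ e : Fin r, (f e a b * f e c d + f e b c * f e a d + f e c a * f e b d)) = 0)
    (a x y z : Fin r) :
    (∑ c : Fin r, (f a x c * f c y z - f a y c * f c x z + f a z c * f c x y)) = 0 := by
  have h := jacobi_key f hf₁ hf₂ hJac a x y z
  have h2 : (∑ c : Fin r, (f a x c * f c y z - f a y c * f c x z + f a z c * f c x y))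
      = - ∑ c : Fin r, (f a y c * f c x z - f a x c * f c y z - f a z c * f c x y) := by
    rw [← Finset.sum_neg_distrib]
    exact Finset.sum_congr rfl fun c _ => by ring
  rw [h2, h, neg_zero]

end Aux3

section Aux4
variable {r : ℕ}

lemma jsmul_smul (c d : ℂ) (x : Jet r) : c • (d • x) = (c * d) • x := smul_smul c d x

lemma jsmul_sub (c : ℂ) (x y : Jet r) : c • (x - y) = c • x - c • y := smul_sub c x y

lemma jsmul_add (c : ℂ) (x y : Jet r) : c • (x + y) = c • x + c • y := smul_add c x y

lemma jsub_smul (c d : ℂ) (x : Jet r) : (c - d) • x = c • x - d • x := sub_smul c d x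

lemma jadd_smul (c d : ℂ) (x : Jet r) : (c + d) • x = c • x + d • x := add_smul c d x

end Aux4
set_option maxHeartbeats 2000000 in
/-- If the structure constants satisfy the Jacobi identity, then for every
`a` and `μ` the anomaly
`𝒜(C_a^μ,T) := f_{abc}(- v_{bν} C_c^{μν} + u_b C_c^μ + F_b^{μν} B_{cν} - (d^μ ũ_b) B_c)`
vanishes in the jet algebra `𝒜`. -/
theorem anomaly_CmuT_vanishes
    (r : ℕ) (hr : 1 ≤ r) (f : Fin r → Fin r → Fin r → ℝ)
    (hf₁ : ∀ a b c, f a b c = - f b a c) (hf₂ : ∀ a b c, f a b c = - f a c b)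
    (hJac : ∀ a b c d : Fin r,
      (∑ e : Fin r, (f e a b * f e c d + f e b c * f e a d + f e c a * f e b d)) = 0)
    (D : DerData r) :
    ∀ (a : Fin r) (μ : Idx),
      (∑ b : Fin r, ∑ c : Fin r, ((f a b c : ℝ) : ℂ) •
          (- ∑ ν : Idx, vGen b ν 0 * Cuu D f c μ ν
            + uGen b 0 * Cup D f c μ
            + ∑ ν : Idx, Fuu D b μ ν * Bdn f c ν
            - dUp D μ (utGen b 0) * Bgh f c)) = 0 := by
  intro a μ
  have hsplit :
      (∑ b : Fin r, ∑ c : Fin r, ((f a b c : ℝ) : ℂ) •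
          (- ∑ ν : Idx, vGen b ν 0 * Cuu D f c μ ν
            + uGen b 0 * Cup D f c μ
            + ∑ ν : Idx, Fuu D b μ ν * Bdn f c ν
            - dUp D μ (utGen b 0) * Bgh f c))
        = ∑ x : Fin r, ∑ y : Fin r, ∑ z : Fin r,
            ((∑ c : Fin r, f a x c * f c y z : ℝ) : ℂ) •
              (Pm D μ y x z - Pm D μ x y z - Pm D μ y z x
                - η μ μ • Qm μ x y z - (2⁻¹ * η μ μ) • Qm μ y z x) := by
    calc (∑ b : Fin r, ∑ c : Fin r, ((f a b c : ℝ) : ℂ) •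
          (- ∑ ν : Idx, vGen b ν 0 * Cuu D f c μ ν
            + uGen b 0 * Cup D f c μ
            + ∑ ν : Idx, Fuu D b μ ν * Bdn f c ν
            - dUp D μ (utGen b 0) * Bgh f c))
        = ∑ b : Fin r, ∑ c : Fin r, ∑ d : Fin r, ∑ e : Fin r,
            ((f a b c * f c d e : ℝ) : ℂ) •
              (Pm D μ d b e - Pm D μ b d e - Pm D μ d e b
                - η μ μ • Qm μ b d e - (2⁻¹ * η μ μ) • Qm μ d e b) := by
          simp only [bracket_eq, jsmul_sum, jsmul_smul, ← Complex.ofReal_mul]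
      _ = _ := quad_reindex f a _
  rw [hsplit]
  simp only [jsmul_sub, Finset.sum_sub_distrib]
  have e1 : (∑ x : Fin r, ∑ y : Fin r, ∑ z : Fin r,
        ((∑ c : Fin r, f a x c * f c y z : ℝ) : ℂ) • Pm D μ y x z)
      = ∑ x : Fin r, ∑ y : Fin r, ∑ z : Fin r,
        ((∑ c : Fin r, f a y c * f c x z : ℝ) : ℂ) • Pm D μ x y z := triple_swap _
  have e3 : (∑ x : Fin r, ∑ y : Fin r, ∑ z : Fin r,
        ((∑ c : Fin r, f a x c * f c y z : ℝ) : ℂ) • Pm D μ y z x)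
      = ∑ x : Fin r, ∑ y : Fin r, ∑ z : Fin r,
        ((∑ c : Fin r, f a z c * f c x y : ℝ) : ℂ) • Pm D μ x y z := triple_rotate _
  have e5 : (∑ x : Fin r, ∑ y : Fin r, ∑ z : Fin r,
        ((∑ c : Fin r, f a x c * f c y z : ℝ) : ℂ) • ((2⁻¹ * η μ μ) • Qm μ y z x))
      = ∑ x : Fin r, ∑ y : Fin r, ∑ z : Fin r,
        ((∑ c : Fin r, f a z c * f c x y : ℝ) : ℂ) • ((2⁻¹ * η μ μ) • Qm μ x y z) :=
    triple_rotate _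
  rw [e1, e3, e5]
  have hP : (∑ x : Fin r, ∑ y : Fin r, ∑ z : Fin r,
        ((∑ c : Fin r, f a y c * f c x z : ℝ) : ℂ) • Pm D μ x y z)
      - (∑ x : Fin r, ∑ y : Fin r, ∑ z : Fin r,
        ((∑ c : Fin r, f a x c * f c y z : ℝ) : ℂ) • Pm D μ x y z)
      - (∑ x : Fin r, ∑ y : Fin r, ∑ z : Fin r,
        ((∑ c : Fin r, f a z c * f c x y : ℝ) : ℂ) • Pm D μ x y z) = 0 := by
    simp only [← Finset.sum_sub_distrib]
    refine Finset.sum_eq_zero fun x _ => Finset.sum_eq_zero fun y _ =>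
      Finset.sum_eq_zero fun z _ => ?_
    rw [← jsub_smul, ← jsub_smul, ← Complex.ofReal_sub, ← Complex.ofReal_sub,
      ← Finset.sum_sub_distrib, ← Finset.sum_sub_distrib,
      jacobi_key f hf₁ hf₂ hJac a x y z, Complex.ofReal_zero, zero_smul]
  have hA : (∑ x : Fin r, ∑ y : Fin r, ∑ z : Fin r,
        ((∑ c : Fin r, f a x c * f c y z : ℝ) : ℂ) • Qm μ x y z)
      = -(∑ x : Fin r, ∑ y : Fin r, ∑ z : Fin r,
        ((∑ c : Fin r, f a y c * f c x z : ℝ) : ℂ) • Qm μ x y z) := by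
    calc (∑ x : Fin r, ∑ y : Fin r, ∑ z : Fin r,
          ((∑ c : Fin r, f a x c * f c y z : ℝ) : ℂ) • Qm μ x y z)
        = ∑ x : Fin r, ∑ y : Fin r, ∑ z : Fin r,
          ((∑ c : Fin r, f a y c * f c x z : ℝ) : ℂ) • Qm μ y x z := triple_swap _
      _ = -(∑ x : Fin r, ∑ y : Fin r, ∑ z : Fin r,
          ((∑ c : Fin r, f a y c * f c x z : ℝ) : ℂ) • Qm μ x y z) := by
          simp only [← Finset.sum_neg_distrib]
          refine Finset.sum_congr rfl fun x _ => Finset.sum_congr rfl fun y _ =>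
            Finset.sum_congr rfl fun z _ => ?_
          rw [Qm_antisymm μ x y z, jsmul_neg]
  have hABC : (∑ x : Fin r, ∑ y : Fin r, ∑ z : Fin r,
        ((∑ c : Fin r, f a x c * f c y z : ℝ) : ℂ) • Qm μ x y z)
      - (∑ x : Fin r, ∑ y : Fin r, ∑ z : Fin r,
        ((∑ c : Fin r, f a y c * f c x z : ℝ) : ℂ) • Qm μ x y z)
      + (∑ x : Fin r, ∑ y : Fin r, ∑ z : Fin r,
        ((∑ c : Fin r, f a z c * f c x y : ℝ) : ℂ) • Qm μ x y z) = 0 := by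
    simp only [← Finset.sum_sub_distrib, ← Finset.sum_add_distrib]
    refine Finset.sum_eq_zero fun x _ => Finset.sum_eq_zero fun y _ =>
      Finset.sum_eq_zero fun z _ => ?_
    rw [← jsub_smul, ← jadd_smul, ← Complex.ofReal_sub, ← Complex.ofReal_add,
      ← Finset.sum_sub_distrib, ← Finset.sum_add_distrib,
      jacobi_key' f hf₁ hf₂ hJac a x y z, Complex.ofReal_zero, zero_smul]
  have hQ : (∑ x : Fin r, ∑ y : Fin r, ∑ z : Fin r,
        ((∑ c : Fin r, f a x c * f c y z : ℝ) : ℂ) • (η μ μ • Qm μ x y z))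
      + (∑ x : Fin r, ∑ y : Fin r, ∑ z : Fin r,
        ((∑ c : Fin r, f a z c * f c x y : ℝ) : ℂ) • ((2⁻¹ * η μ μ) • Qm μ x y z)) = 0 := by
    have hS4 : (∑ x : Fin r, ∑ y : Fin r, ∑ z : Fin r,
          ((∑ c : Fin r, f a x c * f c y z : ℝ) : ℂ) • (η μ μ • Qm μ x y z))
        = η μ μ • ∑ x : Fin r, ∑ y : Fin r, ∑ z : Fin r,
          ((∑ c : Fin r, f a x c * f c y z : ℝ) : ℂ) • Qm μ x y z := by
      simp only [jsmul_sum]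
      refine Finset.sum_congr rfl fun x _ => Finset.sum_congr rfl fun y _ =>
        Finset.sum_congr rfl fun z _ => ?_
      rw [jsmul_smul, jsmul_smul, mul_comm]
    have hS5 : (∑ x : Fin r, ∑ y : Fin r, ∑ z : Fin r,
          ((∑ c : Fin r, f a z c * f c x y : ℝ) : ℂ) • ((2⁻¹ * η μ μ) • Qm μ x y z))
        = (2⁻¹ * η μ μ) • ∑ x : Fin r, ∑ y : Fin r, ∑ z : Fin r,
          ((∑ c : Fin r, f a z c * f c x y : ℝ) : ℂ) • Qm μ x y z := by
      simp only [jsmul_sum]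
      refine Finset.sum_congr rfl fun x _ => Finset.sum_congr rfl fun y _ =>
        Finset.sum_congr rfl fun z _ => ?_
      rw [jsmul_smul, jsmul_smul, mul_comm]
    rw [hS4, hS5]
    have hB : (∑ x : Fin r, ∑ y : Fin r, ∑ z : Fin r,
          ((∑ c : Fin r, f a y c * f c x z : ℝ) : ℂ) • Qm μ x y z)
        = -(∑ x : Fin r, ∑ y : Fin r, ∑ z : Fin r,
          ((∑ c : Fin r, f a x c * f c y z : ℝ) : ℂ) • Qm μ x y z) := by
      rw [hA, neg_neg]
    have hC := eq_neg_of_add_eq_zero_right hABC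
    rw [hC, hB, sub_neg_eq_add, jsmul_neg, jsmul_add, ← jadd_smul,
      show (2⁻¹ * η μ μ : ℂ) + 2⁻¹ * η μ μ = η μ μ by ring]
    exact add_neg_cancel _
  have hfin : ∀ t1 s2 t3 s4 t5 : Jet r, t1 - s2 - t3 = 0 → s4 + t5 = 0 →
      t1 - s2 - t3 - s4 - t5 = 0 := by
    intro t1 s2 t3 s4 t5 h1 h2
    have h3 : t1 - s2 - t3 - s4 - t5 = (t1 - s2 - t3) - (s4 + t5) := by abel
    rw [h3, h1, h2, sub_zero]
  exact hfin _ _ _ _ _ hP hQ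

end
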